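/- Let R be a commutative radical Banach algebra with a bounded approximate identity. Then R² = R, and hence R has no maximal ideals. -/

import Mathlib

open Filter

/-- `M` is an ideal of the (non-unital) commutative algebra `R`. -/
def IsIdeal {R : Type*} [NonUnitalCommRing R] [Module ℂ R] (M : Submodule ℂ R) : Prop :=
  ∀ a : R, ∀ x ∈ M, a * x ∈ M

/-- `M` is a maximal ideal of `R`. -/
def IsMaximalIdeal {R : Type*} [NonUnitalCommRing R] [Module ℂ R] (M : Submodule ℂ R) : Prop :=
  IsIdeal M ∧ M ≠ ⊤ ∧ ∀ N : Submodule ℂ R, IsIdeal N → M ≤ N → N = M ∨ N = ⊤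

/-- `R²`: the linear span of all products `a * b` with `a, b ∈ R`. -/
def sqIdeal (R : Type*) [NonUnitalCommRing R] [Module ℂ R] : Submodule ℂ R :=
  Submodule.span ℂ {x : R | ∃ a b : R, x = a * b}

/-- `R` is a radical algebra: every element is quasi-invertible. -/
def IsRadicalAlgebra (R : Type*) [NonUnitalCommRing R] [Module ℂ R] : Prop :=
  ∀ a : R, ∃ b : R, a + b - a * b = 0

/-- A bounded approximate identity: a bounded net `(e_i)` with `e_i * a → a` for all `a`. -/
def HasBAI (R : Type*) [NonUnitalNormedCommRing R] : Prop :=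
  ∃ (ι : Type) (l : Filter ι) (e : ι → R) (C : ℝ), l.NeBot ∧ (∀ i, ‖e i‖ ≤ C) ∧
    ∀ a : R, Filter.Tendsto (fun i => e i * a) l (nhds a)

section Aux

variable {R : Type*} [NonUnitalNormedCommRing R] [NormedSpace ℂ R]
    [IsScalarTower ℂ R R] [SMulCommClass ℂ R R]

/-- The invariant maintained through the Cohen factorization iteration, stated inside the
unitization.  The state is a triple `(b, q, u)`; writing `Fₙ = τⁿ·1 + u`, the invariant says
`Fₙ * b = a` and `Fₙ * (1 - q) = τⁿ·1`, i.e. `q` encodes the inverse of `Fₙ`. -/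
def CohenGood (a : R) (τ : ℂ) (n : ℕ) (s : R × R × R) : Prop :=
  (algebraMap ℂ (Unitization ℂ R) (τ ^ n) + (s.2.2 : Unitization ℂ R)) * (s.1 : Unitization ℂ R)
      = (a : Unitization ℂ R) ∧
  (algebraMap ℂ (Unitization ℂ R) (τ ^ n) + (s.2.2 : Unitization ℂ R))
      * (1 - (s.2.1 : Unitization ℂ R)) = algebraMap ℂ (Unitization ℂ R) (τ ^ n)

/-- Quasi-inverse with a norm bound, for elements of norm at most `1/2`. -/
lemma qi_small (hrad : IsRadicalAlgebra R) (h : R) (hh : ‖h‖ ≤ 1 / 2) :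
    ∃ s : R, s + h * s = h ∧ ‖s‖ ≤ 1 := by
  obtain ⟨s, hs⟩ := hrad (-h)
  rw [neg_mul, sub_neg_eq_add] at hs
  have hs' : s + h * s = h := by
    have : s + h * s - h = 0 := by rw [← hs]; abel
    exact sub_eq_zero.mp this
  refine ⟨s, hs', ?_⟩
  have h1 : s = h - h * s := eq_sub_of_add_eq hs'
  have h2 : ‖s‖ ≤ ‖h‖ + ‖h‖ * ‖s‖ := by
    calc ‖s‖ = ‖h - h * s‖ := by rw [← h1]
    _ ≤ ‖h‖ + ‖h * s‖ := norm_sub_le _ _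
    _ ≤ ‖h‖ + ‖h‖ * ‖s‖ := by gcongr; exact norm_mul_le _ _
  nlinarith [norm_nonneg s, norm_nonneg h]

/-- The inductive step of the Cohen factorization argument. -/
lemma cohen_step (hrad : IsRadicalAlgebra R)
    {ι : Type} {l : Filter ι} [l.NeBot] {e : ι → R} {C' : ℝ}
    (hCe : ∀ i, ‖e i‖ ≤ C')
    (he : ∀ x : R, Tendsto (fun i => e i * x) l (nhds x))
    {γ t δ : ℝ} (htpos : 0 < t) (hδpos : 0 < δ)
    (hδt : δ * t = γ) (ht : t = 1 - γ) (hkey : δ * (C' + 1) ≤ 1 / 2)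
    (a : R) (n : ℕ) (s : R × R × R) (hgood : CohenGood a ((t : ℂ)) n s) :
    ∃ s' : R × R × R, CohenGood a ((t : ℂ)) (n + 1) s' ∧
      ‖s'.1 - s.1‖ ≤ (1 / 2) ^ n ∧ ‖s'.2.2 - s.2.2‖ ≤ γ * C' * t ^ n := by
  obtain ⟨b, q, u⟩ := s
  obtain ⟨hg1, hg2⟩ := hgood
  have hγpos : 0 < γ := by rw [← hδt]; positivity
  -- choose the approximate identity element
  set ε : ℝ := (1 / 2) ^ n / (2 * δ * (1 + ‖q‖) + 1) with hεdef
  have hden : (0:ℝ) < 2 * δ * (1 + ‖q‖) + 1 := by positivity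
  have hεpos : 0 < ε := by positivity
  have h1 := (Metric.tendsto_nhds.mp (he b)) ε hεpos
  have h2 := (Metric.tendsto_nhds.mp (he q)) 1 one_pos
  obtain ⟨i, hib, hiq⟩ := (h1.and h2).exists
  set E : R := e i with hEdef
  have hpb : ‖b - E * b‖ ≤ ε := by
    rw [norm_sub_rev]; exact le_of_lt (by simpa [dist_eq_norm] using hib)
  have hqE : ‖q - q * E‖ ≤ 1 := by
    rw [norm_sub_rev, mul_comm]; exact le_of_lt (by simpa [dist_eq_norm] using hiq)
  -- the auxiliary elements
  set w : R := E + q - q * E with hwdef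
  have hwn : ‖w‖ ≤ C' + 1 := by
    calc ‖E + q - q * E‖ = ‖E + (q - q * E)‖ := by rw [add_sub_assoc]
    _ ≤ ‖E‖ + ‖q - q * E‖ := norm_add_le _ _
    _ ≤ C' + 1 := add_le_add (hCe i) hqE
  set h : R := ((δ : ℂ)) • w with hhdef
  have hhn : ‖h‖ ≤ 1 / 2 := by
    rw [hhdef, norm_smul, Complex.norm_real, Real.norm_of_nonneg hδpos.le]
    calc δ * ‖w‖ ≤ δ * (C' + 1) := by gcongr
    _ ≤ 1 / 2 := hkey
  obtain ⟨sq, hsq, hsqn⟩ := qi_small hrad h hhn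
  set p : R := b - E * b with hpdef
  set p1 : R := p - q * p with hp1def
  set p2 : R := p1 - sq * p1 with hp2def
  set d : R := ((δ : ℂ)) • p2 with hddef
  set q' : R := q + sq - sq * q with hq'def
  set u' : R := u + (((γ : ℂ)) * ((t : ℂ)) ^ n) • E with hu'def
  refine ⟨(b + d, q', u'), ⟨?_, ?_⟩, ?_, ?_⟩
  rotate_left 2
  · -- norm bound on b-step
    have hp1n : ‖p1‖ ≤ (1 + ‖q‖) * ε := by
      calc ‖p - q * p‖ ≤ ‖p‖ + ‖q * p‖ := norm_sub_le _ _
      _ ≤ ‖p‖ + ‖q‖ * ‖p‖ := by gcongr; exact norm_mul_le _ _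
      _ = (1 + ‖q‖) * ‖p‖ := by ring
      _ ≤ (1 + ‖q‖) * ε := by gcongr
    have hp2n : ‖p2‖ ≤ 2 * ((1 + ‖q‖) * ε) := by
      calc ‖p1 - sq * p1‖ ≤ ‖p1‖ + ‖sq * p1‖ := norm_sub_le _ _
      _ ≤ ‖p1‖ + ‖sq‖ * ‖p1‖ := by gcongr; exact norm_mul_le _ _
      _ ≤ ‖p1‖ + 1 * ‖p1‖ := by gcongr
      _ = 2 * ‖p1‖ := by ring
      _ ≤ 2 * ((1 + ‖q‖) * ε) := by gcongr
    have hdn : ‖d‖ ≤ (1 / 2) ^ n := by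
      rw [hddef, norm_smul, Complex.norm_real, Real.norm_of_nonneg hδpos.le]
      have : δ * ‖p2‖ ≤ δ * (2 * ((1 + ‖q‖) * ε)) := by gcongr
      have heq : ε * (2 * δ * (1 + ‖q‖) + 1) = (1 / 2) ^ n := by
        rw [hεdef]; field_simp
      nlinarith [hεpos.le, norm_nonneg q]
    simpa [add_sub_cancel_left] using hdn
  · -- norm bound on u-step
    show ‖u + (((γ : ℂ)) * ((t : ℂ)) ^ n) • E - u‖ ≤ γ * C' * t ^ n
    rw [add_sub_cancel_left, norm_smul, norm_mul, norm_pow, Complex.norm_real,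
      Complex.norm_real, Real.norm_of_nonneg hγpos.le, Real.norm_of_nonneg htpos.le]
    calc γ * t ^ n * ‖E‖ ≤ γ * t ^ n * C' := by gcongr; exact hCe i
    _ = γ * C' * t ^ n := by ring
  -- the algebraic identities, proven in the unitization
  all_goals {
    dsimp only at hg1 hg2 ⊢
    rw [map_pow] at hg1 hg2 ⊢
    set T : Unitization ℂ R := algebraMap ℂ (Unitization ℂ R) ((t : ℂ)) with hTdef
    set G : Unitization ℂ R := algebraMap ℂ (Unitization ℂ R) ((γ : ℂ)) with hGdef
    set D : Unitization ℂ R := algebraMap ℂ (Unitization ℂ R) ((δ : ℂ)) with hDdef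
    have hsmulU : ∀ (c : ℂ) (x : R),
        (↑(c • x) : Unitization ℂ R) = algebraMap ℂ (Unitization ℂ R) c * ↑x := by
      intro c x
      rw [Unitization.algebraMap_eq_inl, Unitization.inl_mul_inr]
    have hsqU : (↑sq : Unitization ℂ R) + ↑h * ↑sq = ↑h := by
      have := congrArg (fun r : R => (r : Unitization ℂ R)) hsq
      simpa [Unitization.inr_add, Unitization.inr_mul] using this
    have hhU : (↑h : Unitization ℂ R) = D * ↑w := by
      rw [hhdef, hsmulU, hDdef]
    have hwU : (↑w : Unitization ℂ R) = ↑E + ↑q - ↑q * ↑E := by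
      rw [hwdef, Unitization.inr_sub, Unitization.inr_add, Unitization.inr_mul]
    have hδtU : D * T = G := by
      rw [hDdef, hTdef, hGdef, ← map_mul]
      congr 1
      rw [← Complex.ofReal_mul, hδt]
    have htU : T = 1 - G := by
      rw [hTdef, hGdef, show ((t : ℝ) : ℂ) = 1 - ((γ : ℝ) : ℂ) by rw [ht]; push_cast; ring,
        map_sub, map_one]
    have hq'U : (↑q' : Unitization ℂ R) = ↑q + ↑sq - ↑sq * ↑q := by
      rw [hq'def, Unitization.inr_sub, Unitization.inr_add, Unitization.inr_mul]
    have hu'U : (↑u' : Unitization ℂ R) = ↑u + G * T ^ n * ↑E := by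
      rw [hu'def, Unitization.inr_add, hsmulU, map_mul, map_pow, hGdef, hTdef]
    have key2 : (T ^ (n + 1) + ((↑u : Unitization ℂ R) + G * T ^ n * ↑E))
        * (1 - ((↑q : Unitization ℂ R) + ↑sq - ↑sq * ↑q)) = T ^ (n + 1) := by
      linear_combination (1 - (↑sq : Unitization ℂ R)) * hg2 - T ^ n * T * hsqU
        - T ^ n * (1 - (↑sq : Unitization ℂ R)) * T * hhU
        - G * T ^ n * (1 - (↑sq : Unitization ℂ R)) * hwU
        - T ^ n * (1 - (↑sq : Unitization ℂ R)) * (↑w : Unitization ℂ R) * hδtU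
        + (T ^ n * (1 - (↑q : Unitization ℂ R)) * (1 - (↑sq : Unitization ℂ R))
            - T ^ n * (1 - (↑sq : Unitization ℂ R))) * htU
    first
    | (rw [hq'U, hu'U]; exact key2)
    | · -- the first component
        simp only [hu'def, hddef, hp2def, hp1def, hpdef, Unitization.inr_add,
          Unitization.inr_sub, Unitization.inr_mul, hsmulU, map_mul, map_pow,
          ← hTdef, ← hGdef, ← hDdef]
        linear_combination hg1 + T ^ n * (↑b : Unitization ℂ R) * htU
          + T ^ n * (1 - (↑E : Unitization ℂ R)) * (↑b : Unitization ℂ R) * hδtU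
          + D * (1 - (↑E : Unitization ℂ R)) * (↑b : Unitization ℂ R) * key2 }

variable [CompleteSpace R]

/-- Cohen factorization: in a radical Banach algebra with a BAI, every element factors. -/
lemma cohen_factorization (hrad : IsRadicalAlgebra R) (hbai : HasBAI R) (a : R) :
    ∃ u b : R, a = u * b := by
  classical
  obtain ⟨ι, l, e, C, hnb, hC, he⟩ := hbai
  haveI := hnb
  set C' : ℝ := max C 0 with hC'def
  have hC'0 : (0:ℝ) ≤ C' := le_max_right _ _
  have hCe : ∀ i, ‖e i‖ ≤ C' := fun i => (hC i).trans (le_max_left _ _)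
  set γ : ℝ := 1 / (2 * C' + 4) with hγdef
  have hγpos : 0 < γ := by positivity
  set t : ℝ := 1 - γ with htdef
  have hγlt : γ < 1 := by
    rw [hγdef, div_lt_one (by linarith)]; linarith
  have htpos : 0 < t := by rw [htdef]; linarith
  have htlt : t < 1 := by rw [htdef]; linarith
  set δ : ℝ := γ / t with hδdef
  have hδpos : 0 < δ := by positivity
  have hδt : δ * t = γ := by rw [hδdef]; field_simp
  have hkey : δ * (C' + 1) ≤ 1 / 2 := by
    have ht2 : t = (2 * C' + 3) / (2 * C' + 4) := by
      rw [htdef, hγdef]; field_simp; ring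
    have hδ2 : δ = 1 / (2 * C' + 3) := by
      rw [hδdef, hγdef, ht2]
      rw [div_div_div_eq]
      field_simp
    rw [hδ2, div_mul_eq_mul_div, div_le_iff₀ (by linarith)]
    linarith
  -- iterate the Cohen step
  have step : ∀ (n : ℕ) (s : R × R × R), ∃ s' : R × R × R,
      CohenGood a ((t : ℂ)) n s →
        (CohenGood a ((t : ℂ)) (n + 1) s' ∧
          ‖s'.1 - s.1‖ ≤ (1 / 2) ^ n ∧ ‖s'.2.2 - s.2.2‖ ≤ γ * C' * t ^ n) := by
    intro n s
    by_cases hg : CohenGood a ((t : ℂ)) n s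
    · obtain ⟨s', h1, h2, h3⟩ := cohen_step hrad hCe he htpos hδpos hδt htdef hkey a n s hg
      exact ⟨s', fun _ => ⟨h1, h2, h3⟩⟩
    · exact ⟨s, fun hg' => absurd hg' hg⟩
  choose f hf using step
  set F : ℕ → R × R × R := fun n => Nat.rec (a, 0, 0) f n with hFdef
  have hF0 : F 0 = (a, 0, 0) := rfl
  have hFs : ∀ n, F (n + 1) = f n (F n) := fun n => rfl
  have hgood : ∀ n, CohenGood a ((t : ℂ)) n (F n) := by
    intro n
    induction n with
    | zero =>
      constructor <;>
        simp [hF0, CohenGood, Unitization.inr_zero]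
    | succ n ih =>
      rw [hFs]
      exact (hf n (F n) ih).1
  have hbd : ∀ n, ‖(F (n + 1)).1 - (F n).1‖ ≤ (1 / 2) ^ n ∧
      ‖(F (n + 1)).2.2 - (F n).2.2‖ ≤ γ * C' * t ^ n := by
    intro n
    rw [hFs]
    exact ⟨(hf n (F n) (hgood n)).2.1, (hf n (F n) (hgood n)).2.2⟩
  -- the sequences converge
  have hcb : CauchySeq (fun n => (F n).1) := by
    apply cauchySeq_of_le_geometric (1/2) 1 (by norm_num)
    intro n
    rw [dist_eq_norm, norm_sub_rev, one_mul]
    exact (hbd n).1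
  have hcu : CauchySeq (fun n => (F n).2.2) := by
    apply cauchySeq_of_le_geometric t (γ * C') htlt
    intro n
    rw [dist_eq_norm, norm_sub_rev]
    exact (hbd n).2
  obtain ⟨blim, hblim⟩ := cauchySeq_tendsto_of_complete hcb
  obtain ⟨ulim, hulim⟩ := cauchySeq_tendsto_of_complete hcu
  refine ⟨ulim, blim, ?_⟩
  -- pull the invariant back to `R`
  have hconst : ∀ n, ((t : ℂ)) ^ n • (F n).1 + (F n).2.2 * (F n).1 = a := by
    intro n
    have hinv := (hgood n).1
    apply Unitization.inr_injective (R := ℂ)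
    rw [Unitization.inr_add, Unitization.inr_mul]
    rw [show (↑(((t : ℂ)) ^ n • (F n).1) : Unitization ℂ R)
        = algebraMap ℂ (Unitization ℂ R) (((t : ℂ)) ^ n) * ↑(F n).1 by
      rw [Unitization.algebraMap_eq_inl, Unitization.inl_mul_inr]]
    linear_combination hinv
  -- take limits
  have hτ : Tendsto (fun n : ℕ => ((t : ℂ)) ^ n) atTop (nhds 0) := by
    apply tendsto_pow_atTop_nhds_zero_of_norm_lt_one
    rw [Complex.norm_real, Real.norm_of_nonneg htpos.le]
    exact htlt
  have hlim : Tendsto (fun n => ((t : ℂ)) ^ n • (F n).1 + (F n).2.2 * (F n).1) atTop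
      (nhds (ulim * blim)) := by
    have := (hτ.smul hblim).add (hulim.mul hblim)
    simpa using this
  have hlim' : Tendsto (fun _ : ℕ => a) atTop (nhds (ulim * blim)) := by
    simpa [hconst] using hlim
  exact tendsto_nhds_unique tendsto_const_nhds hlim'

end Aux

/-- A commutative radical Banach algebra with a bounded approximate identity satisfies
`R² = R`, and hence has no maximal ideals. -/
theorem radical_banach_algebra_with_bai_no_maximal_ideals
    {R : Type*} [NonUnitalNormedCommRing R] [NormedSpace ℂ R]
    [IsScalarTower ℂ R R] [SMulCommClass ℂ R R] [CompleteSpace R]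
    (hrad : IsRadicalAlgebra R) (hbai : HasBAI R) :
    sqIdeal R = ⊤ ∧ ∀ M : Submodule ℂ R, ¬ IsMaximalIdeal M := by
  have hsq : sqIdeal R = ⊤ := by
    rw [Submodule.eq_top_iff']
    intro a
    obtain ⟨u, b, hab⟩ := cohen_factorization hrad hbai a
    exact Submodule.subset_span ⟨u, b, hab⟩
  refine ⟨hsq, ?_⟩
  rintro M ⟨hMid, hMne, hMmax⟩
  -- the ideal of elements annihilating `R` modulo `M`
  set N : Submodule ℂ R :=
    { carrier := {x | ∀ r : R, r * x ∈ M}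
      add_mem' := fun {x y} hx hy r => by
        rw [mul_add]; exact M.add_mem (hx r) (hy r)
      zero_mem' := fun r => by rw [mul_zero]; exact M.zero_mem
      smul_mem' := fun c x hx r => by
        rw [mul_smul_comm]; exact M.smul_mem c (hx r) } with hNdef
  have hNid : IsIdeal N := by
    intro a x hx r
    show r * (a * x) ∈ M
    rw [show r * (a * x) = (r * a) * x from (mul_assoc r a x).symm]
    exact hx (r * a)
  have hMN : M ≤ N := fun x hx r => hMid r x hx
  have hNM : N = M := by
    rcases hMmax N hNid hMN with h | h
    · exact h
    · exfalso
      apply hMne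
      have hsqM : sqIdeal R ≤ M := by
        rw [sqIdeal, Submodule.span_le]
        rintro x ⟨u, b, rfl⟩
        have hb : b ∈ N := h ▸ Submodule.mem_top
        exact hb u
      rw [hsq] at hsqM
      exact top_le_iff.mp hsqM
  -- pick an element outside M
  have hex : ∃ x₀ : R, x₀ ∉ M := by
    by_contra hc
    push_neg at hc
    exact hMne (Submodule.eq_top_iff'.mpr hc)
  obtain ⟨x₀, hx₀⟩ := hex
  -- the ideal M + R·x₀
  set T : Submodule ℂ R :=
    { carrier := {y | ∃ r : R, y = r * x₀}
      add_mem' := fun {y z} hy hz => by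
        obtain ⟨r1, rfl⟩ := hy; obtain ⟨r2, rfl⟩ := hz
        exact ⟨r1 + r2, (add_mul r1 r2 x₀).symm⟩
      zero_mem' := ⟨0, (zero_mul x₀).symm⟩
      smul_mem' := fun c y hy => by
        obtain ⟨r, rfl⟩ := hy
        exact ⟨c • r, (smul_mul_assoc c r x₀).symm⟩ } with hTdef
  set J : Submodule ℂ R := M ⊔ T with hJdef
  have hJid : IsIdeal J := by
    intro a x hx
    rcases Submodule.mem_sup.mp hx with ⟨m, hm, y, hy, rfl⟩
    obtain ⟨r, rfl⟩ := hy
    refine Submodule.mem_sup.mpr ⟨a * m, hMid a m hm, a * (r * x₀), ⟨a * r, (mul_assoc a r x₀).symm⟩, ?_⟩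
    rw [mul_add]
  have hMJ : M ≤ J := le_sup_left
  rcases hMmax J hJid hMJ with h | h
  · -- J = M: then x₀ ∈ N = M, contradiction
    apply hx₀
    rw [← hNM]
    intro r
    have : r * x₀ ∈ J := Submodule.mem_sup.mpr
      ⟨0, M.zero_mem, r * x₀, ⟨r, rfl⟩, (zero_add _)⟩
    rwa [h] at this
  · -- J = ⊤: then x₀ = m + r * x₀, use quasi-invertibility of r
    have hx₀J : x₀ ∈ J := h ▸ Submodule.mem_top
    rcases Submodule.mem_sup.mp hx₀J with ⟨m, hm, y, hy, hxy⟩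
    obtain ⟨r, rfl⟩ := hy
    obtain ⟨r', hr'⟩ := hrad r
    -- x₀ = m - r' * m
    have hx₀eq : x₀ = m - r' * m := by
      apply Unitization.inr_injective (R := ℂ)
      have h1 : (↑x₀ : Unitization ℂ R) = ↑m + ↑r * ↑x₀ := by
        have := congrArg (fun z : R => (z : Unitization ℂ R)) hxy
        simpa [Unitization.inr_add, Unitization.inr_mul] using this.symm
      have h2 : (↑r : Unitization ℂ R) + ↑r' - ↑r * ↑r' = 0 := by
        have := congrArg (fun z : R => (z : Unitization ℂ R)) hr'
        simpa [Unitization.inr_add, Unitization.inr_sub, Unitization.inr_mul,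
          Unitization.inr_zero] using this
      rw [Unitization.inr_sub, Unitization.inr_mul]
      linear_combination (1 - (↑r' : Unitization ℂ R)) * h1 + (↑x₀ : Unitization ℂ R) * h2
    apply hx₀
    rw [hx₀eq]
    exact M.sub_mem hm (hMid r' m hm)
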